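/- For every integer k with 1 ≤ k ≤ n−1, replacing each conditioning set by its complement in the definition of u_k yields u_{n−k}; that is, (C(n,k+1)·C(k+1,2))^{-1} Σ_{1≤i<j≤n} Σ_{a⊆{1,…,n}∖{i,j}, |a|=k−1} I(X_i; X_j | X^{{1,…,n}∖(a∪{i,j})}) = u_{n−k}(X). -/

import Mathlib

open MeasureTheory Finset

noncomputable section

variable {Ω : Type*} [MeasurableSpace Ω]

/-- Shannon entropy of a finite-valued random variable `Z` under the measure `μ`
(with the convention that the entropy of an empty tuple is `negMulLog (μ univ) = 0`
for a probability measure). -/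
def ent {α : Type*} [Fintype α] (μ : Measure Ω) (Z : Ω → α) : ℝ :=
  ∑ z : α, Real.negMulLog ((μ (Z ⁻¹' {z})).toReal)

/-- Conditional entropy `H(A | B)`. -/
def condEnt {α β : Type*} [Fintype α] [Fintype β] (μ : Measure Ω)
    (A : Ω → α) (B : Ω → β) : ℝ :=
  ent μ (fun ω => (A ω, B ω)) - ent μ B

/-- Mutual information `I(A ; B)`. -/
def mi {α β : Type*} [Fintype α] [Fintype β] (μ : Measure Ω)
    (A : Ω → α) (B : Ω → β) : ℝ :=
  ent μ A + ent μ B - ent μ (fun ω => (A ω, B ω))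

/-- Conditional mutual information `I(A ; B | C)`. -/
def cmi {α β γ : Type*} [Fintype α] [Fintype β] [Fintype γ] (μ : Measure Ω)
    (A : Ω → α) (B : Ω → β) (C : Ω → γ) : ℝ :=
  ent μ (fun ω => (A ω, C ω)) + ent μ (fun ω => (B ω, C ω))
    - ent μ (fun ω => (A ω, B ω, C ω)) - ent μ C

/-- The sub-tuple `X^a = (X_i)_{i ∈ a}` of the random vector `X = (X_1, …, X_n)`. -/
def restr {n : ℕ} {S : Type*} (X : Fin n → Ω → S) (a : Finset (Fin n)) :
    Ω → (a → S) :=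
  fun ω i => X i.1 ω

/-- Average subset entropy `r_k(X) = C(n,k)⁻¹ ∑_{|a| = k} H(X^a)`. -/
def rE {n : ℕ} {S : Type*} [Fintype S] (μ : Measure Ω) (X : Fin n → Ω → S) (k : ℕ) : ℝ :=
  ((n.choose k : ℝ))⁻¹ *
    ∑ a ∈ univ.powerset.filter (fun a : Finset (Fin n) => a.card = k), ent μ (restr X a)

/-- Average conditional pairwise mutual information
`u_k(X) = (C(n,k+1) C(k+1,2))⁻¹ ∑_{i<j} ∑_{|a| = k-1, i,j ∉ a} I(X_i ; X_j | X^a)`. -/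
def uI {n : ℕ} {S : Type*} [Fintype S] (μ : Measure Ω) (X : Fin n → Ω → S) (k : ℕ) : ℝ :=
  ((n.choose (k + 1) : ℝ) * ((k + 1).choose 2 : ℝ))⁻¹ *
    ∑ p ∈ univ.filter (fun p : Fin n × Fin n => p.1 < p.2),
      ∑ a ∈ (univ \ ({p.1, p.2} : Finset (Fin n))).powerset.filter
          (fun a : Finset (Fin n) => a.card = k - 1),
        cmi μ (X p.1) (X p.2) (restr X a)

set_option maxHeartbeats 1000000 in
/-- Replacing each conditioning set by its complement in the
definition of `u_k` yields `u_{n-k}` (the entropic conjugate of `u_k`). -/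
theorem conj_u_eq_u {Ω S : Type*} [MeasurableSpace Ω]
    [Fintype S] [MeasurableSpace S] [MeasurableSingletonClass S]
    {n : ℕ} (hn : 2 ≤ n) (μ : Measure Ω) [IsProbabilityMeasure μ]
    (X : Fin n → Ω → S) (hX : ∀ i, Measurable (X i))
    (k : ℕ) (hk1 : 1 ≤ k) (hk2 : k ≤ n - 1) :
    ((n.choose (k + 1) : ℝ) * ((k + 1).choose 2 : ℝ))⁻¹ *
      ∑ p ∈ univ.filter (fun p : Fin n × Fin n => p.1 < p.2),
        ∑ a ∈ (univ \ ({p.1, p.2} : Finset (Fin n))).powerset.filter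
            (fun a : Finset (Fin n) => a.card = k - 1),
          cmi μ (X p.1) (X p.2) (restr X (univ \ (a ∪ {p.1, p.2})))
    = uI μ X (n - k) := by
  have hkn : k + 1 ≤ n := by omega
  have hmn : (n - k) + 1 ≤ n := by omega
  -- coefficient equality
  have hcoef : n.choose (k + 1) * (k + 1).choose 2 =
      n.choose ((n - k) + 1) * ((n - k) + 1).choose 2 := by
    rw [Nat.choose_mul (by omega), Nat.choose_mul (by omega)]
    congr 1
    have h1 : k + 1 - 2 = k - 1 := by omega
    have h2 : (n - k) + 1 - 2 = (n - k) - 1 := by omega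
    rw [h1, h2, ← Nat.choose_symm (show k - 1 ≤ n - 2 by omega)]
    congr 1
    omega
  have hcoefR : ((n.choose (k + 1) : ℝ) * ((k + 1).choose 2 : ℝ)) =
      ((n.choose ((n - k) + 1) : ℝ) * (((n - k) + 1).choose 2 : ℝ)) := by
    exact_mod_cast congrArg (Nat.cast : ℕ → ℝ) hcoef
  rw [uI, ← hcoefR]
  congr 1
  refine Finset.sum_congr rfl (fun p hp => ?_)
  simp only [Finset.mem_filter] at hp
  have hne : p.1 ≠ p.2 := ne_of_lt hp.2
  have hP2 : ({p.1, p.2} : Finset (Fin n)).card = 2 := by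
    rw [Finset.card_insert_of_notMem (by simp [hne]), Finset.card_singleton]
  refine Finset.sum_nbij' (fun a => univ \ (a ∪ {p.1, p.2}))
    (fun b => univ \ (b ∪ {p.1, p.2})) ?_ ?_ ?_ ?_ ?_
  · intro a ha
    simp only [Finset.mem_filter, Finset.mem_powerset] at ha ⊢
    obtain ⟨hsub, hcard⟩ := ha
    have hdisj : Disjoint a ({p.1, p.2} : Finset (Fin n)) := by
      rw [Finset.disjoint_right]
      intro x hx hxa
      have := hsub hxa
      simp only [Finset.mem_sdiff] at this
      exact this.2 hx
    constructor
    · intro x hx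
      simp only [Finset.mem_sdiff, Finset.mem_union] at hx ⊢
      exact ⟨Finset.mem_univ x, fun h => hx.2 (Or.inr h)⟩
    · rw [Finset.card_sdiff_of_subset (Finset.subset_univ _), Finset.card_union_of_disjoint hdisj,
        hP2, hcard, Finset.card_univ, Fintype.card_fin]
      omega
  · intro b hb
    simp only [Finset.mem_filter, Finset.mem_powerset] at hb ⊢
    obtain ⟨hsub, hcard⟩ := hb
    have hdisj : Disjoint b ({p.1, p.2} : Finset (Fin n)) := by
      rw [Finset.disjoint_right]
      intro x hx hxb
      have := hsub hxb
      simp only [Finset.mem_sdiff] at this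
      exact this.2 hx
    constructor
    · intro x hx
      simp only [Finset.mem_sdiff, Finset.mem_union] at hx ⊢
      exact ⟨Finset.mem_univ x, fun h => hx.2 (Or.inr h)⟩
    · rw [Finset.card_sdiff_of_subset (Finset.subset_univ _), Finset.card_union_of_disjoint hdisj,
        hP2, hcard, Finset.card_univ, Fintype.card_fin]
      omega
  · intro a ha
    simp only [Finset.mem_filter, Finset.mem_powerset] at ha
    have hnotP : ∀ x ∈ a, x ∉ ({p.1, p.2} : Finset (Fin n)) := by
      intro x hx
      have := ha.1 hx
      simp only [Finset.mem_sdiff] at this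
      exact this.2
    ext x
    simp only [Finset.mem_sdiff, Finset.mem_union, Finset.mem_univ, true_and]
    have hx := hnotP x
    tauto
  · intro b hb
    simp only [Finset.mem_filter, Finset.mem_powerset] at hb
    have hnotP : ∀ x ∈ b, x ∉ ({p.1, p.2} : Finset (Fin n)) := by
      intro x hx
      have := hb.1 hx
      simp only [Finset.mem_sdiff] at this
      exact this.2
    ext x
    simp only [Finset.mem_sdiff, Finset.mem_union, Finset.mem_univ, true_and]
    have hx := hnotP x
    tauto
  · intro a ha
    rfl
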